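/- Let π be a prior on labels with support S, let p be a fully supported probability vector, and q(ℓ) = p(ℓ)π(ℓ)/Σ_{ℓ'}p(ℓ')π(ℓ'). Then q equals the conditional distribution of the tilted distribution p·π restricted to S, and KL(q ‖ p) ≤ −log(Σ_{ℓ∈S} p(ℓ)) + log(max_{ℓ∈S} π(ℓ) / min_{ℓ∈S} π(ℓ)). -/

import Mathlib

/-- The posterior `q(ℓ) = p(ℓ)π(ℓ)/∑ p π` is the conditional of the tilted distribution
`p·π` restricted to the support `S` of `π`, and its KL divergence to `p` is bounded by
`-log (∑_{ℓ∈S} p ℓ) + log (max_S π / min_S π)`. -/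
theorem posterior_kl_bound (ι : Type) [Fintype ι] [DecidableEq ι] (p pr : ι → ℝ)
    (hp : ∀ l, 0 < p l) (hps : ∑ l, p l = 1) (hpr : ∀ l, 0 ≤ pr l)
    (S : Finset ι) (hS : S = Finset.univ.filter fun l => 0 < pr l) (hSne : S.Nonempty) :
    let q : ι → ℝ := fun l => p l * pr l / ∑ l', p l' * pr l'
    (∀ l, q l = if l ∈ S then p l * pr l / ∑ l' ∈ S, p l' * pr l' else 0) ∧
    (∑ l, q l * Real.log (q l / p l)) ≤
      -Real.log (∑ l ∈ S, p l) + Real.log ((S.sup' hSne pr) / (S.inf' hSne pr)) := by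
  intro q
  have hon : ∀ l ∈ S, 0 < pr l := by
    intro l hl; rw [hS] at hl; exact (Finset.mem_filter.mp hl).2
  have hoff : ∀ l ∉ S, pr l = 0 := by
    intro l hl
    rw [hS, Finset.mem_filter] at hl
    push_neg at hl
    exact le_antisymm (hl (Finset.mem_univ l)) (hpr l)
  have Zeq : (∑ l', p l' * pr l') = ∑ l' ∈ S, p l' * pr l' := by
    symm
    apply Finset.sum_subset (Finset.subset_univ S)
    intro l _ hl
    rw [hoff l hl, mul_zero]
  have hZpos : 0 < ∑ l' ∈ S, p l' * pr l' :=
    Finset.sum_pos (fun l hl => mul_pos (hp l) (hon l hl)) hSne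
  set Z := ∑ l' ∈ S, p l' * pr l' with hZ
  have hm : 0 < S.inf' hSne pr := (Finset.lt_inf'_iff _).mpr hon
  obtain ⟨l0, hl0⟩ := hSne
  have hM : 0 < S.sup' ⟨l0, hl0⟩ pr := lt_of_lt_of_le (hon l0 hl0) (Finset.le_sup' pr hl0)
  have hPS : 0 < ∑ l ∈ S, p l := Finset.sum_pos (fun l _ => hp l) ⟨l0, hl0⟩
  have part1 : ∀ l, q l = if l ∈ S then p l * pr l / Z else 0 := by
    intro l
    simp only [q, Zeq]
    split_ifs with h
    · rfl
    · rw [hoff l h, mul_zero, zero_div]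
  have hqS : ∑ l ∈ S, q l = 1 := by
    simp only [q, Zeq]
    rw [← Finset.sum_div, div_self (ne_of_gt hZpos)]
  refine ⟨part1, ?_⟩
  have hsum : (∑ l, q l * Real.log (q l / p l)) = ∑ l ∈ S, q l * Real.log (q l / p l) := by
    symm
    apply Finset.sum_subset (Finset.subset_univ S)
    intro l _ hl
    rw [part1 l, if_neg hl, zero_mul]
  rw [hsum]
  have key : ∀ l ∈ S, q l * Real.log (q l / p l)
      ≤ q l * (Real.log (S.sup' ⟨l0, hl0⟩ pr) - Real.log Z) := by
    intro l hl
    have hq : q l = p l * pr l / Z := by rw [part1 l, if_pos hl]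
    have hqpos : 0 ≤ q l := by
      rw [hq]; exact le_of_lt (div_pos (mul_pos (hp l) (hon l hl)) hZpos)
    have hratio : q l / p l = pr l / Z := by
      rw [hq]
      rw [div_right_comm, mul_div_cancel_left₀ _ (ne_of_gt (hp l))]
    rw [hratio, Real.log_div (ne_of_gt (hon l hl)) (ne_of_gt hZpos)]
    apply mul_le_mul_of_nonneg_left _ hqpos
    have : Real.log (pr l) ≤ Real.log (S.sup' ⟨l0, hl0⟩ pr) :=
      Real.log_le_log (hon l hl) (Finset.le_sup' pr hl)
    linarith
  have hZge : (∑ l ∈ S, p l) * S.inf' ⟨l0, hl0⟩ pr ≤ Z := by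
    rw [Finset.sum_mul]
    exact Finset.sum_le_sum fun l hl =>
      mul_le_mul_of_nonneg_left (Finset.inf'_le pr hl) (hp l).le
  have hlog : Real.log ((∑ l ∈ S, p l) * S.inf' ⟨l0, hl0⟩ pr) ≤ Real.log Z :=
    Real.log_le_log (mul_pos hPS hm) hZge
  rw [Real.log_mul (ne_of_gt hPS) (ne_of_gt hm)] at hlog
  calc ∑ l ∈ S, q l * Real.log (q l / p l)
      ≤ ∑ l ∈ S, q l * (Real.log (S.sup' ⟨l0, hl0⟩ pr) - Real.log Z) :=
        Finset.sum_le_sum key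
    _ = Real.log (S.sup' ⟨l0, hl0⟩ pr) - Real.log Z := by
        rw [← Finset.sum_mul, hqS, one_mul]
    _ ≤ _ := by
        rw [Real.log_div (ne_of_gt hM) (ne_of_gt hm)]
        linarith
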